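/- arXiv:math/0608142 — 2 statements merged into one kernel-verified Lean document; each statement's English description precedes it below -/
import Mathlib

section
/- Let ξ be obtained from η ∈ ℕ^{ℕ₊} via the map T (particle n at position p(n) = ∑_{z=1}^n η(z) + n). Then for every n ≥ 1: ∑_{x=1}^{n} ξ(x) + ∑_{y=1}^{S(n)} η(y) ≤ n ≤ ∑_{x=1}^{n} ξ(x) + ∑_{y=1}^{S(n)+1} η(y), where S(n) = ∑_{x=1}^{n} ξ(x). -/
open Classical

/-- Position of the n-th particle: p(n) = ∑_{z=1}^n η(z) + n. -/
def particlePos (η : ℕ → ℕ) (n : ℕ) : ℕ := (∑ z ∈ Finset.Icc 1 n, η z) + n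

/-- The exclusion configuration associated to η: indicator of the range of `particlePos`. -/
noncomputable def zrToExc (η : ℕ → ℕ) (x : ℕ) : ℕ :=
  if ∃ n : ℕ, 1 ≤ n ∧ x = particlePos η n then 1 else 0

lemma particlePos_strictMono (η : ℕ → ℕ) : StrictMono (particlePos η) := by
  intro a b hab
  unfold particlePos
  have hs : (∑ z ∈ Finset.Icc 1 a, η z) ≤ ∑ z ∈ Finset.Icc 1 b, η z :=
    Finset.sum_le_sum_of_subset (Finset.Icc_subset_Icc_right hab.le)
  omega

lemma self_le_particlePos (η : ℕ → ℕ) (m : ℕ) : m ≤ particlePos η m := by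
  unfold particlePos; omega

/-- With S(n) = ∑_{x=1}^n ξ(x):
S(n) + ∑_{y=1}^{S(n)} η(y) ≤ n ≤ S(n) + ∑_{y=1}^{S(n)+1} η(y). -/
theorem stmt_3 (η : ℕ → ℕ) (n : ℕ) (hn : 1 ≤ n) :
    (∑ x ∈ Finset.Icc 1 n, zrToExc η x)
        + ∑ y ∈ Finset.Icc 1 (∑ x ∈ Finset.Icc 1 n, zrToExc η x), η y ≤ n ∧
    n ≤ (∑ x ∈ Finset.Icc 1 n, zrToExc η x)
        + ∑ y ∈ Finset.Icc 1 ((∑ x ∈ Finset.Icc 1 n, zrToExc η x) + 1), η y := by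
  set p := particlePos η with hp
  set k := Nat.findGreatest (fun m => p m ≤ n) n with hk
  have hpk : p k ≤ n := by
    have h0 : p 0 ≤ n := by simp [hp, particlePos]
    exact Nat.findGreatest_spec (P := fun m => p m ≤ n) (Nat.zero_le n) h0
  have hpk1 : n < p (k + 1) := by
    by_cases h : k + 1 ≤ n
    · have := Nat.findGreatest_is_greatest (P := fun m => p m ≤ n) (by omega : k < k + 1) h
      omega
    · have := self_le_particlePos η (k + 1)
      rw [← hp] at this
      omega
  -- S(n) = k
  have hS : (∑ x ∈ Finset.Icc 1 n, zrToExc η x) = k := by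
    have hcard : (∑ x ∈ Finset.Icc 1 n, zrToExc η x)
        = ((Finset.Icc 1 n).filter (fun x => ∃ m : ℕ, 1 ≤ m ∧ x = p m)).card := by
      rw [Finset.card_filter]
      simp [zrToExc, hp]
    have himg : (Finset.Icc 1 k).image p
        = (Finset.Icc 1 n).filter (fun x => ∃ m : ℕ, 1 ≤ m ∧ x = p m) := by
      ext x
      simp only [Finset.mem_image, Finset.mem_filter, Finset.mem_Icc]
      constructor
      · rintro ⟨m, ⟨hm1, hmk⟩, rfl⟩
        have h1 : p m ≤ p k := (particlePos_strictMono η).monotone hmk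
        have h2 := self_le_particlePos η m
        rw [← hp] at h2
        exact ⟨⟨by omega, by omega⟩, m, hm1, rfl⟩
      · rintro ⟨⟨hx1, hxn⟩, m, hm1, rfl⟩
        refine ⟨m, ⟨hm1, ?_⟩, rfl⟩
        by_contra h
        have : p (k + 1) ≤ p m := (particlePos_strictMono η).monotone (by omega)
        omega
    rw [hcard, ← himg,
      Finset.card_image_of_injective _ (particlePos_strictMono η).injective,
      Nat.card_Icc]
    omega
  rw [hS]
  have hk1 : p k = (∑ y ∈ Finset.Icc 1 k, η y) + k := rfl
  have hk2 : p (k + 1) = (∑ y ∈ Finset.Icc 1 (k + 1), η y) + (k + 1) := rfl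
  omega
end

section
/- If μ is absolutely continuous with respect to ν with density dμ/dν, then the relative entropy H(μ|ν) = sup_f { ∫ f dμ - log ∫ e^f dν } (supremum over bounded measurable f) equals ∫ log(dμ/dν) dμ. -/
open MeasureTheory Classical

/-- The relative entropy H(μ|ν), defined by the variational formula as a supremum
over bounded measurable functions, valued in the extended reals. -/
noncomputable def relEnt {Ω : Type*} [MeasurableSpace Ω] (μ ν : Measure Ω) : EReal :=
  ⨆ f : {f : Ω → ℝ // Measurable f ∧ ∃ C : ℝ, ∀ x, |f x| ≤ C},
    ((∫ x, f.1 x ∂μ - Real.log (∫ x, Real.exp (f.1 x) ∂ν) : ℝ) : EReal)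

section Aux

open Real Filter

/-- Young's inequality for the entropy pairing. -/
lemma young_aux (u v : ℝ) (hu : 0 ≤ u) : u * v ≤ u * Real.log u - u + Real.exp v := by
  rcases eq_or_lt_of_le hu with h | h
  · simp only [← h, zero_mul, sub_zero, zero_add, zero_sub, neg_zero]
    positivity
  · have h1 : v - Real.log u + 1 ≤ Real.exp (v - Real.log u) :=
      Real.add_one_le_exp _
    have h2 : u * (v - Real.log u + 1) ≤ u * Real.exp (v - Real.log u) :=
      mul_le_mul_of_nonneg_left h1 hu
    have h3 : u * Real.exp (v - Real.log u) = Real.exp v := by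
      rw [Real.exp_sub, Real.exp_log h]
      field_simp
    nlinarith

lemma abs_clamp_le (n t : ℝ) (hn : 0 ≤ n) : |max (-n) (min n t)| ≤ |t| := by
  rcases le_total t (-n) with h | h
  · rw [min_eq_right (h.trans (by linarith)), max_eq_left h]
    rw [abs_neg, abs_of_nonneg hn]
    calc n = -(-n) := by ring
    _ ≤ -t := by linarith
    _ ≤ |t| := neg_le_abs t
  · rcases le_total t n with h2 | h2
    · rw [min_eq_right h2, max_eq_right h]
    · rw [min_eq_left h2, max_eq_right (neg_le_self hn)]
      rw [abs_of_nonneg hn]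
      exact le_trans h2 (le_abs_self t)

lemma clamp_eq_sub (n t : ℝ) (hn : 0 ≤ n) :
    max (-n) (min n t) = min n (max t 0) - min n (max (-t) 0) := by
  rcases le_total t 0 with h | h
  · rw [max_eq_right h, min_eq_right hn, max_eq_left (neg_nonneg.mpr h),
      min_eq_right (h.trans hn), zero_sub, ← max_neg_neg, neg_neg]
  · rw [max_eq_left h, max_eq_right (neg_nonpos.mpr h), min_eq_right hn, sub_zero,
      max_eq_right (le_trans (neg_nonpos.mpr hn) (le_min hn h))]

lemma mul_neg_log_le_one (u : ℝ) (hu : 0 ≤ u) : u * max (-Real.log u) 0 ≤ 1 := by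
  rcases eq_or_lt_of_le hu with h | h
  · simp [← h]
  · rcases le_total (Real.log u) 0 with hl | hl
    · rw [max_eq_left (by linarith)]
      have h2 : Real.log u⁻¹ ≤ u⁻¹ - 1 := Real.log_le_sub_one_of_pos (inv_pos.mpr h)
      rw [Real.log_inv] at h2
      have := mul_le_mul_of_nonneg_left h2 hu
      rw [mul_sub, mul_inv_cancel₀ h.ne'] at this
      nlinarith
    · rw [max_eq_right (by linarith)]
      simp

lemma integrable_of_bdd {Ω : Type*} [MeasurableSpace Ω] {ν : Measure Ω} [IsFiniteMeasure ν]
    {f : Ω → ℝ} (hf : Measurable f) {C : ℝ} (hC : ∀ x, |f x| ≤ C) : Integrable f ν :=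
  Integrable.mono' (integrable_const C) hf.aestronglyMeasurable
    (Filter.Eventually.of_forall fun x => (Real.norm_eq_abs _ ▸ hC x))

/-- The Gibbs inequality: for bounded measurable `f`,
`∫ f dμ - log ∫ e^f dν ≤ ∫ llr dμ`. -/
lemma gibbs_ineq {Ω : Type*} [MeasurableSpace Ω] (μ ν : Measure Ω)
    [IsProbabilityMeasure μ] [IsProbabilityMeasure ν] (hμν : μ ≪ ν)
    (hint : Integrable (llr μ ν) μ) (f : Ω → ℝ) (hf : Measurable f)
    {C : ℝ} (hC : ∀ x, |f x| ≤ C) :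
    ∫ x, f x ∂μ - Real.log (∫ x, Real.exp (f x) ∂ν) ≤ ∫ x, llr μ ν x ∂μ := by
  set ρ : Ω → ℝ := fun x => (μ.rnDeriv ν x).toReal with hρ
  have hρ_meas : Measurable ρ := (Measure.measurable_rnDeriv μ ν).ennreal_toReal
  have hZ_int : Integrable (fun x => Real.exp (f x)) ν := by
    refine integrable_of_bdd hf.exp (C := Real.exp C) fun x => ?_
    rw [abs_of_nonneg (Real.exp_pos _).le]
    exact Real.exp_le_exp.mpr ((le_abs_self _).trans (hC x))
  set Z := ∫ x, Real.exp (f x) ∂ν with hZ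
  have hZpos : 0 < Z := integral_exp_pos hZ_int
  set g : Ω → ℝ := fun x => f x - Real.log Z with hgdef
  have hg_meas : Measurable g := hf.sub measurable_const
  have hg_bdd : ∀ x, |g x| ≤ C + |Real.log Z| := fun x =>
    (abs_sub (f x) (Real.log Z)).trans (by gcongr; exact hC x)
  have hg_int_μ : Integrable g μ := integrable_of_bdd hg_meas hg_bdd
  have h_expg_int : Integrable (fun x => Real.exp (g x)) ν := by
    refine integrable_of_bdd hg_meas.exp (C := Real.exp (C + |Real.log Z|)) fun x => ?_
    rw [abs_of_nonneg (Real.exp_pos _).le]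
    exact Real.exp_le_exp.mpr ((le_abs_self _).trans (hg_bdd x))
  have h_expg : ∫ x, Real.exp (g x) ∂ν = 1 := by
    have : ∀ x, Real.exp (g x) = Real.exp (f x) / Z := by
      intro x
      rw [hgdef, Real.exp_sub, Real.exp_log hZpos]
    simp_rw [this]
    rw [integral_div, div_self hZpos.ne']
  have h1 : Integrable (fun x => ρ x * g x) ν := by
    have := (integrable_rnDeriv_smul_iff hμν).mpr hg_int_μ
    simpa [smul_eq_mul] using this
  have h2 : Integrable (fun x => ρ x * llr μ ν x) ν := by
    have := (integrable_rnDeriv_smul_iff hμν).mpr hint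
    simpa [smul_eq_mul] using this
  have h3 : Integrable ρ ν := Measure.integrable_toReal_rnDeriv
  have h23 : Integrable (fun x => ρ x * llr μ ν x - ρ x) ν := h2.sub h3
  have hmono : ∫ x, ρ x * g x ∂ν ≤ ∫ x, (ρ x * llr μ ν x - ρ x + Real.exp (g x)) ∂ν := by
    refine integral_mono h1 (h23.add h_expg_int) fun x => ?_
    exact young_aux (ρ x) (g x) ENNReal.toReal_nonneg
  have hL : ∫ x, ρ x * g x ∂ν = ∫ x, g x ∂μ := by
    have := integral_rnDeriv_smul hμν (f := g)
    simpa [smul_eq_mul] using this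
  have hllr : ∫ x, ρ x * llr μ ν x ∂ν = ∫ x, llr μ ν x ∂μ := by
    have := integral_rnDeriv_smul hμν (f := llr μ ν)
    simpa [smul_eq_mul] using this
  have hρ1 : ∫ x, ρ x ∂ν = 1 := by
    rw [hρ, Measure.integral_toReal_rnDeriv hμν]
    simp
  have hR : ∫ x, (ρ x * llr μ ν x - ρ x + Real.exp (g x)) ∂ν
      = ∫ x, llr μ ν x ∂μ := by
    rw [integral_add h23 h_expg_int, integral_sub h2 h3, h_expg, hllr, hρ1]
    ring
  have hf_int : Integrable f μ := integrable_of_bdd hf hC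
  have hgint : ∫ x, g x ∂μ = ∫ x, f x ∂μ - Real.log Z := by
    rw [hgdef]
    rw [integral_sub hf_int (integrable_const _)]
    simp
  rw [hR, hL, hgint] at hmono
  exact hmono

end Aux

open Real Filter

/-- If μ ≪ ν then H(μ|ν) = ∫ log(dμ/dν) dμ, interpreted as an extended real in
[0,∞] (it equals +∞ when the log-likelihood ratio is not μ-integrable). -/
theorem stmt_5 {Ω : Type*} [MeasurableSpace Ω] (μ ν : Measure Ω)
    [IsProbabilityMeasure μ] [IsProbabilityMeasure ν] (hμν : μ ≪ ν) :
    relEnt μ ν =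
      if Integrable (MeasureTheory.llr μ ν) μ
        then ((∫ x, MeasureTheory.llr μ ν x ∂μ : ℝ) : EReal)
        else (⊤ : EReal) := by
  set L : Ω → ℝ := llr μ ν with hLdef
  have hL_meas : Measurable L := measurable_llr μ ν
  set ρ : Ω → ℝ := fun x => (μ.rnDeriv ν x).toReal with hρdef
  set fn : ℕ → Ω → ℝ :=
    fun n x => if μ.rnDeriv ν x = 0 then -(n:ℝ) else max (-(n:ℝ)) (min (n:ℝ) (L x)) with hfn
  have hset : MeasurableSet {x | μ.rnDeriv ν x = 0} :=
    Measure.measurable_rnDeriv μ ν (measurableSet_singleton 0)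
  have hfn_meas : ∀ n, Measurable (fn n) := fun n =>
    Measurable.ite hset measurable_const (measurable_const.max (measurable_const.min hL_meas))
  have hfn_bdd : ∀ (n : ℕ) x, |fn n x| ≤ (n:ℝ) := by
    intro n x
    by_cases h : μ.rnDeriv ν x = 0
    · simp [hfn, h]
    · simp only [hfn, if_neg h]
      rw [abs_le]
      refine ⟨le_max_left _ _, max_le (by
        have := Nat.cast_nonneg (α := ℝ) n; linarith) (min_le_left _ _)⟩
  have hfn_ae : ∀ n : ℕ, fn n =ᵐ[μ] fun x => max (-(n:ℝ)) (min (n:ℝ) (L x)) := by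
    intro n
    filter_upwards [Measure.rnDeriv_pos hμν] with x hx
    simp [hfn, hx.ne']
  have hexp_int : ∀ n : ℕ, Integrable (fun x => Real.exp (fn n x)) ν := fun n =>
    integrable_of_bdd (hfn_meas n).exp (C := Real.exp n) (fun x => by
      rw [abs_of_nonneg (Real.exp_pos _).le]
      exact Real.exp_le_exp.mpr ((le_abs_self _).trans (hfn_bdd n x)))
  have hZn_pos : ∀ n : ℕ, 0 < ∫ x, Real.exp (fn n x) ∂ν := fun n => integral_exp_pos (hexp_int n)
  have hZn_le : ∀ n : ℕ, ∫ x, Real.exp (fn n x) ∂ν ≤ 1 + Real.exp (-(n:ℝ)) := by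
    intro n
    have hptwise : ∀ᵐ x ∂ν, Real.exp (fn n x) ≤ ρ x + Real.exp (-(n:ℝ)) := by
      filter_upwards [Measure.rnDeriv_lt_top μ ν] with x hx
      by_cases h : μ.rnDeriv ν x = 0
      · simp only [hfn, if_pos h]
        exact le_add_of_nonneg_left ENNReal.toReal_nonneg
      · have hρpos : 0 < ρ x := ENNReal.toReal_pos h hx.ne
        simp only [hfn, if_neg h]
        have h1 : Real.exp (min (n:ℝ) (L x)) ≤ ρ x := by
          calc Real.exp (min (n:ℝ) (L x)) ≤ Real.exp (L x) :=
                Real.exp_le_exp.mpr (min_le_right _ _)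
          _ = ρ x := Real.exp_log hρpos
        rcases le_total (-(n:ℝ)) (min (n:ℝ) (L x)) with hcmp | hcmp
        · rw [max_eq_right hcmp]
          exact h1.trans (le_add_of_nonneg_right (Real.exp_pos _).le)
        · rw [max_eq_left hcmp]
          exact le_add_of_nonneg_left ENNReal.toReal_nonneg
    have hρint : Integrable ρ ν := Measure.integrable_toReal_rnDeriv
    have hadd : Integrable (fun x => ρ x + Real.exp (-(n:ℝ))) ν :=
      hρint.add (integrable_const _)
    have key := integral_mono_ae (hexp_int n) hadd hptwise
    rw [integral_add hρint (integrable_const _), hρdef,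
      Measure.integral_toReal_rnDeriv hμν, integral_const] at key
    simpa using key
  have hval : ∀ n : ℕ,
      ((∫ x, fn n x ∂μ - Real.log (∫ x, Real.exp (fn n x) ∂ν) : ℝ) : EReal) ≤ relEnt μ ν := by
    intro n
    unfold relEnt
    exact le_iSup (fun (f : {f : Ω → ℝ // Measurable f ∧ ∃ C : ℝ, ∀ x, |f x| ≤ C}) =>
      ((∫ x, f.1 x ∂μ - Real.log (∫ x, Real.exp (f.1 x) ∂ν) : ℝ) : EReal))
      ⟨fn n, hfn_meas n, ⟨(n:ℝ), hfn_bdd n⟩⟩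
  have hb_le : ∀ n : ℕ,
      ((∫ x, fn n x ∂μ - Real.log (1 + Real.exp (-(n:ℝ))) : ℝ) : EReal) ≤ relEnt μ ν := by
    intro n
    refine le_trans (EReal.coe_le_coe_iff.mpr ?_) (hval n)
    have := Real.log_le_log (hZn_pos n) (hZn_le n)
    linarith
  by_cases hint : Integrable (llr μ ν) μ
  · rw [if_pos hint]
    refine le_antisymm ?_ ?_
    · unfold relEnt
      refine iSup_le fun f => ?_
      obtain ⟨C, hC⟩ := f.2.2
      exact EReal.coe_le_coe_iff.mpr (gibbs_ineq μ ν hμν hint f.1 f.2.1 hC)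
    · have hInt_tendsto : Tendsto (fun n : ℕ => ∫ x, fn n x ∂μ) atTop (nhds (∫ x, L x ∂μ)) := by
        refine tendsto_integral_of_dominated_convergence (fun x => |L x|)
          (fun n => (hfn_meas n).aestronglyMeasurable) hint.abs ?_ ?_
        · intro n
          filter_upwards [Measure.rnDeriv_pos hμν] with x hx
          rw [Real.norm_eq_abs]
          simp only [hfn, if_neg hx.ne']
          exact abs_clamp_le _ _ (Nat.cast_nonneg n)
        · filter_upwards [Measure.rnDeriv_pos hμν] with x hx
          refine tendsto_atTop_of_eventually_const (i₀ := ⌈|L x|⌉₊) fun n hn => ?_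
          have hn' : |L x| ≤ (n:ℝ) := (Nat.le_ceil _).trans (Nat.cast_le.mpr hn)
          simp only [hfn, if_neg hx.ne']
          rw [min_eq_right (abs_le.mp hn').2, max_eq_right (abs_le.mp hn').1]
      have hlog_tendsto :
          Tendsto (fun n : ℕ => Real.log (1 + Real.exp (-(n:ℝ)))) atTop (nhds 0) := by
        have h1 : Tendsto (fun n : ℕ => Real.exp (-(n:ℝ))) atTop (nhds 0) :=
          Real.tendsto_exp_neg_atTop_nhds_zero.comp tendsto_natCast_atTop_atTop
        have h2 : Tendsto (fun n : ℕ => 1 + Real.exp (-(n:ℝ))) atTop (nhds 1) := by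
          simpa using tendsto_const_nhds.add h1
        have h3 := (Real.continuousAt_log one_ne_zero).tendsto.comp h2
        simpa [Function.comp_def] using h3
      have hb_tendsto :
          Tendsto (fun n : ℕ =>
            ((∫ x, fn n x ∂μ - Real.log (1 + Real.exp (-(n:ℝ))) : ℝ) : EReal)) atTop
            (nhds ((∫ x, L x ∂μ : ℝ) : EReal)) := by
        have h4 := hInt_tendsto.sub hlog_tendsto
        rw [sub_zero] at h4
        exact (continuous_coe_real_ereal.tendsto _).comp h4
      exact le_of_tendsto hb_tendsto (Filter.Eventually.of_forall hb_le)
  · rw [if_neg hint]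
    rw [EReal.eq_top_iff_forall_lt]
    intro y
    set Lp : Ω → ℝ := fun x => max (L x) 0 with hLp
    set Lm : Ω → ℝ := fun x => max (-(L x)) 0 with hLm
    have hLp_meas : Measurable Lp := hL_meas.max measurable_const
    have hLm_meas : Measurable Lm := hL_meas.neg.max measurable_const
    have hLm_int : Integrable Lm μ := by
      have hsm : Integrable (fun x => (μ.rnDeriv ν x).toReal * Lm x) ν := by
        refine integrable_of_bdd ((Measure.measurable_rnDeriv μ ν).ennreal_toReal.mul hLm_meas)
          (C := 1) fun x => ?_
        rw [abs_of_nonneg (mul_nonneg ENNReal.toReal_nonneg (le_max_right _ _))]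
        exact mul_neg_log_le_one _ ENNReal.toReal_nonneg
      exact (integrable_rnDeriv_smul_iff hμν).mp (by simpa [smul_eq_mul] using hsm)
    have hLp_nonint : ¬ Integrable Lp μ := by
      intro hpos
      apply hint
      have hid : ∀ x, Lp x - Lm x = L x := by
        intro x
        rcases le_total (L x) 0 with h | h
        · rw [hLp, hLm]
          simp only
          rw [max_eq_right h, max_eq_left (neg_nonneg.mpr h)]
          ring
        · rw [hLp, hLm]
          simp only
          rw [max_eq_left h, max_eq_right (neg_nonpos.mpr h)]
          ring
      exact (hpos.sub hLm_int).congr (Filter.Eventually.of_forall hid)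
    have hlint_top : ∫⁻ x, ENNReal.ofReal (Lp x) ∂μ = ⊤ := by
      by_contra h
      apply hLp_nonint
      refine ⟨hLp_meas.aestronglyMeasurable, ?_⟩
      have h0 : (0 : Ω → ℝ) ≤ᵐ[μ] Lp :=
        Filter.Eventually.of_forall fun x => le_max_right (L x) 0
      rw [hasFiniteIntegral_iff_ofReal h0]
      exact lt_top_iff_ne_top.mpr h
    have hsup : ∀ x, (⨆ n : ℕ, ENNReal.ofReal (min (n:ℝ) (Lp x))) = ENNReal.ofReal (Lp x) := by
      intro x
      apply le_antisymm
      · exact iSup_le fun n => ENNReal.ofReal_le_ofReal (min_le_right _ _)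
      · refine le_iSup_of_le ⌈Lp x⌉₊ ?_
        rw [min_eq_right (Nat.le_ceil _)]
    have hmct : (⨆ n : ℕ, ∫⁻ x, ENNReal.ofReal (min (n:ℝ) (Lp x)) ∂μ) = ⊤ := by
      rw [← lintegral_iSup (fun n => (measurable_const.min hLp_meas).ennreal_ofReal)
        (fun i j hij x => ENNReal.ofReal_le_ofReal (min_le_min (Nat.cast_le.mpr hij) le_rfl))]
      · simp_rw [hsup]
        exact hlint_top
    set K := ∫ x, Lm x ∂μ with hK
    set c := y + K + Real.log 2 with hc
    obtain ⟨n, hn⟩ : ∃ n : ℕ,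
        ENNReal.ofReal c < ∫⁻ x, ENNReal.ofReal (min (n:ℝ) (Lp x)) ∂μ := by
      have h5 : ENNReal.ofReal c < ⨆ n : ℕ, ∫⁻ x, ENNReal.ofReal (min (n:ℝ) (Lp x)) ∂μ := by
        rw [hmct]
        exact ENNReal.ofReal_lt_top
      exact lt_iSup_iff.mp h5
    have hmin_nonneg : ∀ x, 0 ≤ min (n:ℝ) (Lp x) := fun x =>
      le_min (Nat.cast_nonneg n) (le_max_right _ _)
    have hmin_meas : Measurable (fun x => min (n:ℝ) (Lp x)) := measurable_const.min hLp_meas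
    have hfin : ∫⁻ x, ENNReal.ofReal (min (n:ℝ) (Lp x)) ∂μ ≠ ⊤ := by
      refine ne_top_of_le_ne_top (b := ENNReal.ofReal (n:ℝ)) ENNReal.ofReal_ne_top ?_
      calc ∫⁻ x, ENNReal.ofReal (min (n:ℝ) (Lp x)) ∂μ
          ≤ ∫⁻ _, ENNReal.ofReal (n:ℝ) ∂μ :=
            lintegral_mono fun x => ENNReal.ofReal_le_ofReal (min_le_left _ _)
        _ = ENNReal.ofReal (n:ℝ) := by simp
    have hmin_int : Integrable (fun x => min (n:ℝ) (Lp x)) μ := by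
      refine integrable_of_bdd hmin_meas (C := (n:ℝ)) fun x => ?_
      rw [abs_of_nonneg (hmin_nonneg x)]
      exact min_le_left _ _
    have hmin_int_m : Integrable (fun x => min (n:ℝ) (Lm x)) μ := by
      refine integrable_of_bdd (measurable_const.min hLm_meas) (C := (n:ℝ)) fun x => ?_
      rw [abs_of_nonneg (le_min (Nat.cast_nonneg n) (le_max_right _ _))]
      exact min_le_left _ _
    have hIp : ∫ x, min (n:ℝ) (Lp x) ∂μ
        = (∫⁻ x, ENNReal.ofReal (min (n:ℝ) (Lp x)) ∂μ).toReal :=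
      integral_eq_lintegral_of_nonneg_ae (Filter.Eventually.of_forall hmin_nonneg)
        hmin_meas.aestronglyMeasurable
    have hcp : c < ∫ x, min (n:ℝ) (Lp x) ∂μ := by
      rw [hIp]
      calc c ≤ max c 0 := le_max_left _ _
      _ = (ENNReal.ofReal c).toReal := (ENNReal.toReal_ofReal').symm
      _ < _ := (ENNReal.toReal_lt_toReal ENNReal.ofReal_ne_top hfin).mpr hn
    have hfneq : ∫ x, fn n x ∂μ
        = ∫ x, min (n:ℝ) (Lp x) ∂μ - ∫ x, min (n:ℝ) (Lm x) ∂μ := by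
      rw [integral_congr_ae ((hfn_ae n).trans (Filter.Eventually.of_forall fun x =>
        clamp_eq_sub (n:ℝ) (L x) (Nat.cast_nonneg n)))]
      exact integral_sub hmin_int hmin_int_m
    have hIm_le : ∫ x, min (n:ℝ) (Lm x) ∂μ ≤ K :=
      integral_mono hmin_int_m hLm_int fun x => min_le_right _ _
    have hlog2 : Real.log (1 + Real.exp (-(n:ℝ))) ≤ Real.log 2 := by
      refine Real.log_le_log (by positivity) ?_
      have : Real.exp (-(n:ℝ)) ≤ 1 := by
        rw [← Real.exp_zero]
        exact Real.exp_le_exp.mpr (neg_nonpos.mpr (Nat.cast_nonneg n))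
      linarith
    have hyb : y < ∫ x, fn n x ∂μ - Real.log (1 + Real.exp (-(n:ℝ))) := by
      rw [hfneq]
      have := hcp
      rw [hc] at this
      linarith
    exact lt_of_lt_of_le (EReal.coe_lt_coe_iff.mpr hyb) (hb_le n)
end
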